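/- With Σ, W, S, Q as above (W = (Σ^{1/2})^+, Q the orthogonal projector onto colsp(W S)), the matrix P = I − W^+ Q W satisfies P S = 0, provided colsp(S) ⊆ colsp(Σ). -/

import Mathlib

open Matrix

section

open scoped ComplexOrder

/-- The positive semidefinite square root of a positive semidefinite matrix
(the definition of `Matrix.PosSemidef.sqrt` in the older Mathlib, since removed). -/
noncomputable def Matrix.PosSemidef.sqrt {n 𝕜 : Type*} [Fintype n] [DecidableEq n] [RCLike 𝕜]
    {A : Matrix n n 𝕜} (hA : A.PosSemidef) : Matrix n n 𝕜 :=
  hA.1.eigenvectorUnitary.1 * diagonal ((↑) ∘ (fun x : ℝ => Real.sqrt x) ∘ hA.1.eigenvalues) *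
    (star hA.1.eigenvectorUnitary : Matrix n n 𝕜)

end

theorem leace_sqrt_mul_self {d : ℕ} {Sig : Matrix (Fin d) (Fin d) ℝ} (hSig : Sig.PosSemidef) :
    hSig.sqrt * hSig.sqrt = Sig := by
  have hU : star (hSig.1.eigenvectorUnitary.1) * hSig.1.eigenvectorUnitary.1 = 1 :=
    Unitary.star_mul_self_of_mem hSig.1.eigenvectorUnitary.2
  conv_rhs => rw [hSig.1.spectral_theorem]
  rw [Unitary.conjStarAlgAut_apply]
  unfold Matrix.PosSemidef.sqrt
  have hD : diagonal ((↑) ∘ (fun x : ℝ => Real.sqrt x) ∘ hSig.1.eigenvalues) *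
      diagonal ((↑) ∘ (fun x : ℝ => Real.sqrt x) ∘ hSig.1.eigenvalues)
      = diagonal (RCLike.ofReal ∘ hSig.1.eigenvalues : Fin d → ℝ) := by
    rw [diagonal_mul_diagonal]
    congr 1
    funext i
    simp only [Function.comp_apply]
    rw [Real.mul_self_sqrt (hSig.eigenvalues_nonneg i)]
    rfl
  calc _ = hSig.1.eigenvectorUnitary.1 * (diagonal ((↑) ∘ (fun x : ℝ => Real.sqrt x) ∘ hSig.1.eigenvalues) *
      (star (hSig.1.eigenvectorUnitary.1) * hSig.1.eigenvectorUnitary.1) *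
      diagonal ((↑) ∘ (fun x : ℝ => Real.sqrt x) ∘ hSig.1.eigenvalues)) * star (hSig.1.eigenvectorUnitary.1) := by
        simp only [Matrix.mul_assoc]; rfl
    _ = _ := by rw [hU, Matrix.mul_one, hD]

/-- **Idempotence of the LEACE eraser.**
Let `Sig` be a positive semidefinite `d × d` real matrix with p.s.d. square root
`hSig.sqrt`, and let `W` be the Moore–Penrose pseudoinverse of `hSig.sqrt`
(characterized by the four Penrose conditions) and `Wp` the Moore–Penrose
pseudoinverse of `W`.  Let `S` be any `d × k` matrix whose column space is
contained in the column space of `Sig` (i.e. `S = Sig * C` for some `C`), and let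
`Q = (W * S) * T` where `T` is the Moore–Penrose pseudoinverse of `W * S`, so
that `Q` is the orthogonal projection onto `colsp (W * S)`.  Then the LEACE
matrix `P = I - Wp * Q * W` annihilates `S`: `P * S = 0`: LEACE achieves linear guardedness. -/
theorem leace_guards {d k : ℕ}
    (Sig : Matrix (Fin d) (Fin d) ℝ) (hSig : Sig.PosSemidef)
    (W Wp : Matrix (Fin d) (Fin d) ℝ)
    -- W is the Moore–Penrose pseudoinverse of the p.s.d. square root of Sig
    (hW1 : hSig.sqrt * W * hSig.sqrt = hSig.sqrt)
    (hW2 : W * hSig.sqrt * W = W)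
    (hW3 : (hSig.sqrt * W)ᵀ = hSig.sqrt * W)
    (hW4 : (W * hSig.sqrt)ᵀ = W * hSig.sqrt)
    -- Wp is the Moore–Penrose pseudoinverse of W
    (hWp1 : W * Wp * W = W)
    (hWp2 : Wp * W * Wp = Wp)
    (hWp3 : (W * Wp)ᵀ = W * Wp)
    (hWp4 : (Wp * W)ᵀ = Wp * W)
    (S : Matrix (Fin d) (Fin k) ℝ)
    -- colsp(S) ⊆ colsp(Sig)
    (hS : ∃ C : Matrix (Fin d) (Fin k) ℝ, S = Sig * C)
    (T : Matrix (Fin k) (Fin d) ℝ)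
    -- T is the Moore–Penrose pseudoinverse of W * S
    (hT1 : (W * S) * T * (W * S) = W * S)
    (hT2 : T * (W * S) * T = T)
    (hT3 : ((W * S) * T)ᵀ = (W * S) * T)
    (hT4 : (T * (W * S))ᵀ = T * (W * S))
    (Q : Matrix (Fin d) (Fin d) ℝ) (hQ : Q = (W * S) * T)
    (P : Matrix (Fin d) (Fin d) ℝ) (hP : P = 1 - Wp * Q * W) :
    P * S = 0 := by
  obtain ⟨C, rfl⟩ := hS
  have e : hSig.sqrt * hSig.sqrt = Sig := leace_sqrt_mul_self hSig
  have hE : Wp * W = hSig.sqrt * W := by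
    have h1 : Wp * W * (hSig.sqrt * W) = Wp * W := by
      rw [Matrix.mul_assoc Wp W, ← Matrix.mul_assoc W, hW2]
    calc Wp * W = (Wp * W)ᵀ := hWp4.symm
      _ = ((Wp * W) * (hSig.sqrt * W))ᵀ := by rw [h1]
      _ = (hSig.sqrt * W)ᵀ * (Wp * W)ᵀ := by rw [Matrix.transpose_mul]
      _ = (hSig.sqrt * W) * (Wp * W) := by rw [hW3, hWp4]
      _ = hSig.sqrt * (W * Wp * W) := by simp only [Matrix.mul_assoc]
      _ = hSig.sqrt * W := by rw [hWp1]
  have h2 : hSig.sqrt * W * Sig = Sig := by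
    calc hSig.sqrt * W * Sig = hSig.sqrt * W * (hSig.sqrt * hSig.sqrt) := by rw [e]
      _ = hSig.sqrt * W * hSig.sqrt * hSig.sqrt := by simp only [Matrix.mul_assoc]
      _ = Sig := by rw [hW1, e]
  have key : Wp * (W * (Sig * C)) = Sig * C := by
    rw [← Matrix.mul_assoc, hE, ← Matrix.mul_assoc, h2]
  have hQWS : Q * (W * (Sig * C)) = W * (Sig * C) := by rw [hQ]; exact hT1
  rw [hP, Matrix.sub_mul, Matrix.one_mul]
  have h3 : Wp * Q * W * (Sig * C) = Sig * C := by
    simp only [Matrix.mul_assoc] at hQWS ⊢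
    rw [hQWS, key]
  rw [h3, sub_self]
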